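/- In the unlearning setup, for any fixed symmetric d×d real matrix N and any step k, the expectation over the Bernoulli batch selections at step k satisfies E[J_kᵀ N J_k] = J N J + C_f Σ_{f=1}^{n_f} H_f^F N H_f^F + C_r Σ_{r=1}^{n_r} H_r^R N H_r^R. -/

import Mathlib

open Matrix Filter Finset Set
open scoped BigOperators

noncomputable section

/-- Frobenius norm of a real square matrix. -/
def frob {n : Type*} [Fintype n] (M : Matrix n n ℝ) : ℝ :=
  Real.sqrt (∑ i, ∑ j, (M i j) ^ 2)

open Classical in
/-- The positive semidefinite square root of a matrix (junk value `0` on non-PSD input). -/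
def psdSqrt {n : Type*} [Fintype n] [DecidableEq n] (A : Matrix n n ℝ) : Matrix n n ℝ :=
  if h : A.PosSemidef then
    h.1.eigenvectorUnitary.1 * diagonal ((↑) ∘ (√·) ∘ h.1.eigenvalues) *
      (star h.1.eigenvectorUnitary : Matrix n n ℝ)
  else 0

open Classical in
/-- The largest eigenvalue of a symmetric real matrix (junk value `0` otherwise). -/
def lamMax {n : Type*} [Fintype n] [DecidableEq n] (A : Matrix n n ℝ) : ℝ :=
  if h : A.IsHermitian then ⨆ i, h.eigenvalues i else 0

/-- Probability of observing the Bernoulli(B/n) selection pattern `x`. -/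
def selProb (n B : ℕ) (x : Fin n → Bool) : ℝ :=
  ∏ i, if x i then (B : ℝ) / n else 1 - (B : ℝ) / n

/-- Average Hessian of a family. -/
def Hbar {d n : ℕ} (H : Fin n → Matrix (Fin d) (Fin d) ℝ) : Matrix (Fin d) (Fin d) ℝ :=
  (n : ℝ)⁻¹ • ∑ i, H i

/-- Mean update operator `J = I − η(1−α)H_R + ηα H_F`. -/
def Jbar {d nr nf : ℕ} (η α : ℝ) (HR : Fin nr → Matrix (Fin d) (Fin d) ℝ)
    (HF : Fin nf → Matrix (Fin d) (Fin d) ℝ) : Matrix (Fin d) (Fin d) ℝ :=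
  1 - (η * (1 - α)) • Hbar HR + (η * α) • Hbar HF

/-- Random update operator for the batch-selection pattern `x`. -/
def Jop {d nr nf : ℕ} (η α : ℝ) (B : ℕ) (HR : Fin nr → Matrix (Fin d) (Fin d) ℝ)
    (HF : Fin nf → Matrix (Fin d) (Fin d) ℝ)
    (x : (Fin nr → Bool) × (Fin nf → Bool)) : Matrix (Fin d) (Fin d) ℝ :=
  1 - (η * (1 - α) / B) • (∑ r, if x.1 r then HR r else 0)
    + (η * α / B) • (∑ f, if x.2 f then HF f else 0)

/-- `C_r = η²(1−α)²(1/n_r)(1/B − 1/n_r)`. -/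
def Crc (η α : ℝ) (B nr : ℕ) : ℝ :=
  η ^ 2 * (1 - α) ^ 2 * (nr : ℝ)⁻¹ * ((B : ℝ)⁻¹ - (nr : ℝ)⁻¹)

/-- `C_f = η²α²(1/n_f)(1/B − 1/n_f)`. -/
def Cfc (η α : ℝ) (B nf : ℕ) : ℝ :=
  η ^ 2 * α ^ 2 * (nf : ℝ)⁻¹ * ((B : ℝ)⁻¹ - (nf : ℝ)⁻¹)

/-- Noise-accumulation matrices `N_k`. -/
def Nmat {d nr nf : ℕ} (η α : ℝ) (B : ℕ) (HR : Fin nr → Matrix (Fin d) (Fin d) ℝ)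
    (HF : Fin nf → Matrix (Fin d) (Fin d) ℝ) : ℕ → Matrix (Fin d) (Fin d) ℝ
  | 0 => 1
  | k + 1 =>
      Cfc η α B nf • ∑ f, HF f * Nmat η α B HR HF k * HF f
        + Crc η α B nr • ∑ r, HR r * Nmat η α B HR HF k * HR r

/-- `W_k = J_{k−1} ⋯ J_1 J_0` for a finite sequence of batch selections. -/
def Wk {d nr nf : ℕ} (η α : ℝ) (B : ℕ) (HR : Fin nr → Matrix (Fin d) (Fin d) ℝ)
    (HF : Fin nf → Matrix (Fin d) (Fin d) ℝ) {k : ℕ}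
    (s : Fin k → (Fin nr → Bool) × (Fin nf → Bool)) : Matrix (Fin d) (Fin d) ℝ :=
  (List.ofFn fun i => Jop η α B HR HF (s i)).reverse.prod

/-- `E‖w_k‖² = E Tr(W_k W_kᵀ)`, the expectation taken over the i.i.d. Bernoulli
batch selections of the `k` steps. -/
def Ewk2 {d nr nf : ℕ} (η α : ℝ) (B : ℕ) (HR : Fin nr → Matrix (Fin d) (Fin d) ℝ)
    (HF : Fin nf → Matrix (Fin d) (Fin d) ℝ) (k : ℕ) : ℝ :=
  ∑ s : Fin k → (Fin nr → Bool) × (Fin nf → Bool),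
    (∏ i, selProb nr B (s i).1 * selProb nf B (s i).2) *
      (Wk η α B HR HF s * (Wk η α B HR HF s)ᵀ).trace

/-- `E[(e₁ᵀ w_k)²]`, i.e. the `(i0,i0)` entry of `E[W_k W_kᵀ]`. -/
def Ee1 {d nr nf : ℕ} (η α : ℝ) (B : ℕ) (HR : Fin nr → Matrix (Fin d) (Fin d) ℝ)
    (HF : Fin nf → Matrix (Fin d) (Fin d) ℝ) (i0 : Fin d) (k : ℕ) : ℝ :=
  ∑ s : Fin k → (Fin nr → Bool) × (Fin nf → Bool),
    (∏ i, selProb nr B (s i).1 * selProb nf B (s i).2) *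
      ((Wk η α B HR HF s * (Wk η α B HR HF s)ᵀ) i0 i0)

/-- Mixed Hessian `D_{rf} = C'_r H_r^R + C'_f H_f^F` for a retain/forget pair. -/
def Drf {d nr nf : ℕ} (Cr' Cf' : ℝ) (HR : Fin nr → Matrix (Fin d) (Fin d) ℝ)
    (HF : Fin nf → Matrix (Fin d) (Fin d) ℝ) (p : Fin nr × Fin nf) :
    Matrix (Fin d) (Fin d) ℝ :=
  Cr' • HR p.1 + Cf' • HF p.2

/-- Mix-Hessian `D = (1/(n_r n_f)) Σ_{r,f} D_{rf}`. -/
def Dmix {d nr nf : ℕ} (Cr' Cf' : ℝ) (HR : Fin nr → Matrix (Fin d) (Fin d) ℝ)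
    (HF : Fin nf → Matrix (Fin d) (Fin d) ℝ) : Matrix (Fin d) (Fin d) ℝ :=
  ((nr : ℝ) * nf)⁻¹ • ∑ p : Fin nr × Fin nf, Drf Cr' Cf' HR HF p

/-- Mix-coherence matrix `S_{(r,f),(r',f')} = ‖D_{rf}^{1/2} D_{r'f'}^{1/2}‖_F`. -/
def Smat {d nr nf : ℕ} (Cr' Cf' : ℝ) (HR : Fin nr → Matrix (Fin d) (Fin d) ℝ)
    (HF : Fin nf → Matrix (Fin d) (Fin d) ℝ) :
    Matrix (Fin nr × Fin nf) (Fin nr × Fin nf) ℝ :=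
  Matrix.of fun p q =>
    frob (psdSqrt (Drf Cr' Cf' HR HF p) * psdSqrt (Drf Cr' Cf' HR HF q))

/-- Unlearning coherence `σ = λ_max(S) / max_{(r,f)} λ_max(D_{rf})`. -/
def cohSigma {d nr nf : ℕ} (Cr' Cf' : ℝ) (HR : Fin nr → Matrix (Fin d) (Fin d) ℝ)
    (HF : Fin nf → Matrix (Fin d) (Fin d) ℝ) : ℝ :=
  lamMax (Smat Cr' Cf' HR HF) / ⨆ p : Fin nr × Fin nf, lamMax (Drf Cr' Cf' HR HF p)

/-- Stacked filter-weight vector of the two-layer ReLU CNN signal-plus-noise model. -/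
def wvec (d mfil : ℕ) (μ ξi : Fin d → ℝ) (yi : ℝ)
    (ai bi : Bool → Fin mfil → Bool) : (Bool × Fin mfil) × Fin d → ℝ :=
  fun p =>
    ((if p.1.1 then (1 : ℝ) else -1) / mfil) *
      ((if ai p.1.1 p.1.2 then (1 : ℝ) else 0) * μ p.2 +
        (if bi p.1.1 p.1.2 then (1 : ℝ) else 0) * yi * ξi p.2)

/-- Per-sample Hessian `H_i = ℓ''_i w_i w_iᵀ` of the signal-plus-noise model. -/
def hessCNN (d mfil : ℕ) (μ ξi : Fin d → ℝ) (yi ℓi : ℝ)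
    (ai bi : Bool → Fin mfil → Bool) :
    Matrix ((Bool × Fin mfil) × Fin d) ((Bool × Fin mfil) × Fin d) ℝ :=
  ℓi • vecMulVec (wvec d mfil μ ξi yi ai bi) (wvec d mfil μ ξi yi ai bi)

/-- Mixed Hessian `D_{rf} = C'_r H_r + C'_f H_{n_r+f}` in the CNN model, with the
retain set given by the first `n_r` samples and the forget set by the last `n_f`. -/
def DrfCNN (d mfil nr nf : ℕ) (μ : Fin d → ℝ) (ξ : Fin (nr + nf) → Fin d → ℝ)
    (y ℓ : Fin (nr + nf) → ℝ) (a b : Fin (nr + nf) → Bool → Fin mfil → Bool)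
    (Cr' Cf' : ℝ) (p : Fin nr × Fin nf) :
    Matrix ((Bool × Fin mfil) × Fin d) ((Bool × Fin mfil) × Fin d) ℝ :=
  Cr' • hessCNN d mfil μ (ξ (Fin.castAdd nf p.1)) (y (Fin.castAdd nf p.1))
        (ℓ (Fin.castAdd nf p.1)) (a (Fin.castAdd nf p.1)) (b (Fin.castAdd nf p.1))
    + Cf' • hessCNN d mfil μ (ξ (Fin.natAdd nr p.2)) (y (Fin.natAdd nr p.2))
        (ℓ (Fin.natAdd nr p.2)) (a (Fin.natAdd nr p.2)) (b (Fin.natAdd nr p.2))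

/-- Mix-coherence matrix of the CNN model. -/
def SmatCNN (d mfil nr nf : ℕ) (μ : Fin d → ℝ) (ξ : Fin (nr + nf) → Fin d → ℝ)
    (y ℓ : Fin (nr + nf) → ℝ) (a b : Fin (nr + nf) → Bool → Fin mfil → Bool)
    (Cr' Cf' : ℝ) : Matrix (Fin nr × Fin nf) (Fin nr × Fin nf) ℝ :=
  Matrix.of fun p q =>
    frob (psdSqrt (DrfCNN d mfil nr nf μ ξ y ℓ a b Cr' Cf' p) *
      psdSqrt (DrfCNN d mfil nr nf μ ξ y ℓ a b Cr' Cf' q))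


/-! ### Auxiliary lemmas for `stmt8` -/

lemma bool_sum (n : ℕ) (f : Fin n → Bool → ℝ) :
    ∑ x : Fin n → Bool, ∏ j, f j (x j) = ∏ j, (f j true + f j false) := by
  classical
  have h : ∏ j, (f j true + f j false) = ∏ j, ∑ b : Bool, f j b := by simp
  rw [h, Finset.prod_univ_sum]
  apply Finset.sum_congr _ (fun _ _ => rfl)
  ext x; simp

lemma E_one (n B : ℕ) : ∑ x : Fin n → Bool, selProb n B x = 1 := by
  unfold selProb
  rw [bool_sum n (fun j b => if b then (B:ℝ)/n else 1 - (B:ℝ)/n)]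
  simp

lemma E_ind (n B : ℕ) (i : Fin n) :
    ∑ x : Fin n → Bool, selProb n B x * (if x i then (1:ℝ) else 0) = B / n := by
  have h : ∀ x : Fin n → Bool, selProb n B x * (if x i then (1:ℝ) else 0)
      = ∏ j, ((if x j then (B:ℝ)/n else 1 - (B:ℝ)/n) * (if j = i then (if x j then (1:ℝ) else 0) else 1)) := by
    intro x
    rw [Finset.prod_mul_distrib, Finset.prod_ite_eq' Finset.univ i (fun j => if x j then (1:ℝ) else 0)]
    simp [selProb]
  rw [Finset.sum_congr rfl (fun x _ => h x),
    bool_sum n (fun j b => (if b then (B:ℝ)/n else 1 - (B:ℝ)/n) * (if j = i then (if b then (1:ℝ) else 0) else 1))]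
  have key : ∀ j : Fin n,
      ((if (true:Bool) then (B:ℝ)/n else 1 - (B:ℝ)/n) * (if j = i then (if (true:Bool) then (1:ℝ) else 0) else 1)
      + (if (false:Bool) then (B:ℝ)/n else 1 - (B:ℝ)/n) * (if j = i then (if (false:Bool) then (1:ℝ) else 0) else 1))
      = (if j = i then (B:ℝ)/n else 1) := by
    intro j; by_cases hj : j = i
    · simp [hj]
    · simp [hj]
  rw [Finset.prod_congr rfl (fun j _ => key j), Finset.prod_ite_eq' Finset.univ i (fun _ => (B:ℝ)/n)]
  simp

lemma E_mom (n B : ℕ) (i j : Fin n) :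
    ∑ x : Fin n → Bool, selProb n B x * ((if x i then (1:ℝ) else 0) * (if x j then (1:ℝ) else 0))
      = if i = j then (B:ℝ)/n else ((B:ℝ)/n)^2 := by
  rcases eq_or_ne i j with rfl | hij
  · rw [if_pos rfl]
    have h1 : ∀ x : Fin n → Bool, (if x i then (1:ℝ) else 0) * (if x i then (1:ℝ) else 0) = (if x i then (1:ℝ) else 0) := by
      intro x; split_ifs <;> ring
    rw [Finset.sum_congr rfl (fun x _ => by rw [h1 x]), E_ind]
  · rw [if_neg hij]
    have h : ∀ x : Fin n → Bool, selProb n B x * ((if x i then (1:ℝ) else 0) * (if x j then (1:ℝ) else 0))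
        = ∏ k, ((if x k then (B:ℝ)/n else 1 - (B:ℝ)/n)
            * ((if k = i then (if x k then (1:ℝ) else 0) else 1)
            * (if k = j then (if x k then (1:ℝ) else 0) else 1))) := by
      intro x
      rw [Finset.prod_mul_distrib, Finset.prod_mul_distrib,
        Finset.prod_ite_eq' Finset.univ i (fun k => if x k then (1:ℝ) else 0),
        Finset.prod_ite_eq' Finset.univ j (fun k => if x k then (1:ℝ) else 0)]
      simp [selProb]
    rw [Finset.sum_congr rfl (fun x _ => h x),
      bool_sum n (fun k b => (if b then (B:ℝ)/n else 1 - (B:ℝ)/n)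
            * ((if k = i then (if b then (1:ℝ) else 0) else 1)
            * (if k = j then (if b then (1:ℝ) else 0) else 1)))]
    have key : ∀ k : Fin n,
        ((if (true:Bool) then (B:ℝ)/n else 1 - (B:ℝ)/n) * ((if k = i then (if (true:Bool) then (1:ℝ) else 0) else 1) * (if k = j then (if (true:Bool) then (1:ℝ) else 0) else 1))
        + (if (false:Bool) then (B:ℝ)/n else 1 - (B:ℝ)/n) * ((if k = i then (if (false:Bool) then (1:ℝ) else 0) else 1) * (if k = j then (if (false:Bool) then (1:ℝ) else 0) else 1)))
        = (if k = i then (B:ℝ)/n else 1) * (if k = j then (B:ℝ)/n else 1) := by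
      intro k
      by_cases hki : k = i <;> by_cases hkj : k = j
      · exact absurd (hki.symm.trans hkj) hij
      all_goals simp [hki, hkj, hij, Ne.symm hij]
    rw [Finset.prod_congr rfl (fun k _ => key k), Finset.prod_mul_distrib,
      Finset.prod_ite_eq' Finset.univ i (fun _ => (B:ℝ)/n),
      Finset.prod_ite_eq' Finset.univ j (fun _ => (B:ℝ)/n)]
    simp [sq]

lemma main_aux {d : Type*} [Fintype d] [DecidableEq d] {ι : Type*} [Fintype ι] [DecidableEq ι]
    {X : Type*} [Fintype X]
    (w : X → ℝ) (c : ι → X → ℝ) (p : ι → ℝ) (M : ι → Matrix d d ℝ) (N : Matrix d d ℝ)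
    (hw : ∑ x, w x = 1)
    (h1 : ∀ i, ∑ x, w x * c i x = p i)
    (h2 : ∀ i j, ∑ x, w x * (c i x * c j x) = if i = j then p i else p i * p j) :
    ∑ x, w x • ((1 + ∑ i, c i x • M i) * N * (1 + ∑ j, c j x • M j))
      = (1 + ∑ i, p i • M i) * N * (1 + ∑ j, p j • M j)
        + ∑ i, (p i - p i * p i) • (M i * N * M i) := by
  classical
  have expand : ∀ S : Matrix d d ℝ, (1 + S) * N * (1 + S) = N + S * N + N * S + S * N * S := by
    intro S; noncomm_ring
  have hSN : ∀ (a : ι → ℝ), (∑ i, a i • M i) * N = ∑ i, a i • (M i * N) := by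
    intro a; rw [Finset.sum_mul]; simp [smul_mul_assoc]
  have hNS : ∀ (a : ι → ℝ), N * (∑ i, a i • M i) = ∑ i, a i • (N * M i) := by
    intro a; rw [Finset.mul_sum]; simp [mul_smul_comm]
  have hSNS : ∀ (a : ι → ℝ), (∑ i, a i • M i) * N * (∑ j, a j • M j)
      = ∑ i, ∑ j, (a i * a j) • (M i * N * M j) := by
    intro a
    rw [hSN, Finset.sum_mul]
    refine Finset.sum_congr rfl fun i _ => ?_
    rw [Finset.mul_sum]
    refine Finset.sum_congr rfl fun j _ => ?_
    rw [smul_mul_assoc, mul_smul_comm, smul_smul, mul_assoc]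
  -- expand LHS pointwise
  have hpt : ∀ x, w x • ((1 + ∑ i, c i x • M i) * N * (1 + ∑ j, c j x • M j))
      = w x • N + (∑ i, (w x * c i x) • (M i * N)) + (∑ i, (w x * c i x) • (N * M i))
        + ∑ i, ∑ j, (w x * (c i x * c j x)) • (M i * N * M j) := by
    intro x
    rw [expand, hSNS (fun i => c i x), hSN (fun i => c i x), hNS (fun i => c i x)]
    rw [smul_add, smul_add, smul_add, Finset.smul_sum, Finset.smul_sum]
    congr 1
    · congr 1 <;> [skip; skip]
      · congr 1
        exact Finset.sum_congr rfl fun i _ => (smul_smul _ _ _)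
      · exact Finset.sum_congr rfl fun i _ => (smul_smul _ _ _)
    · rw [Finset.smul_sum]
      refine Finset.sum_congr rfl fun i _ => ?_
      rw [Finset.smul_sum]
      exact Finset.sum_congr rfl fun j _ => (smul_smul _ _ _)
  rw [Finset.sum_congr rfl fun x _ => hpt x]
  rw [Finset.sum_add_distrib, Finset.sum_add_distrib, Finset.sum_add_distrib]
  -- compute the four sums
  have A : ∑ x, w x • N = N := by rw [← Finset.sum_smul, hw, one_smul]
  have Bsum : ∑ x, ∑ i, (w x * c i x) • (M i * N) = ∑ i, p i • (M i * N) := by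
    rw [Finset.sum_comm]
    exact Finset.sum_congr rfl fun i _ => by rw [← Finset.sum_smul, h1 i]
  have Csum : ∑ x, ∑ i, (w x * c i x) • (N * M i) = ∑ i, p i • (N * M i) := by
    rw [Finset.sum_comm]
    exact Finset.sum_congr rfl fun i _ => by rw [← Finset.sum_smul, h1 i]
  have Dsum : ∑ x, ∑ i, ∑ j, (w x * (c i x * c j x)) • (M i * N * M j)
      = (∑ i, ∑ j, (p i * p j) • (M i * N * M j)) + ∑ i, (p i - p i * p i) • (M i * N * M i) := by
    rw [Finset.sum_comm]
    have : ∀ i, ∑ x, ∑ j, (w x * (c i x * c j x)) • (M i * N * M j)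
        = ∑ j, (if i = j then p i else p i * p j) • (M i * N * M j) := by
      intro i
      rw [Finset.sum_comm]
      exact Finset.sum_congr rfl fun j _ => by rw [← Finset.sum_smul, h2 i j]
    rw [Finset.sum_congr rfl fun i _ => this i]
    rw [← Finset.sum_add_distrib]
    refine Finset.sum_congr rfl fun i _ => ?_
    have split : ∀ j, (if i = j then p i else p i * p j) • (M i * N * M j)
        = (p i * p j) • (M i * N * M j) + (if i = j then (p i - p i * p i) • (M i * N * M i) else 0) := by
      intro j
      by_cases h : i = j
      · subst h; rw [if_pos rfl, if_pos rfl, ← add_smul]; ring_nf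
      · rw [if_neg h, if_neg h, add_zero]
    rw [Finset.sum_congr rfl fun j _ => split j, Finset.sum_add_distrib,
      Finset.sum_ite_eq Finset.univ i (fun _ => (p i - p i * p i) • (M i * N * M i))]
    simp
  rw [A, Bsum, Csum, Dsum, expand, hSNS p, hSN p, hNS p]
  abel

/-- one-step second-moment identity.  For any fixed symmetric `N`,
`E[J_kᵀ N J_k] = J N J + C_f Σ_f H_f^F N H_f^F + C_r Σ_r H_r^R N H_r^R`, the
expectation taken over the Bernoulli batch selections of step `k`. -/
theorem stmt8 (d nr nf B : ℕ) (hd : 1 ≤ d) (hnr : 1 ≤ nr) (hnf : 1 ≤ nf)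
    (hB : 0 < B) (hBr : B ≤ nr) (hBf : B ≤ nf)
    (η α : ℝ) (hη : 0 < η) (hα : α ∈ Set.Icc (0 : ℝ) 1)
    (HR : Fin nr → Matrix (Fin d) (Fin d) ℝ) (HF : Fin nf → Matrix (Fin d) (Fin d) ℝ)
    (hHR : ∀ r, (HR r).PosSemidef) (hHF : ∀ f, (HF f).PosSemidef)
    (N : Matrix (Fin d) (Fin d) ℝ) (hN : N.IsSymm) :
    ∑ x : (Fin nr → Bool) × (Fin nf → Bool),
        (selProb nr B x.1 * selProb nf B x.2) •
          ((Jop η α B HR HF x)ᵀ * N * Jop η α B HR HF x)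
      = Jbar η α HR HF * N * Jbar η α HR HF
        + Cfc η α B nf • ∑ f, HF f * N * HF f
        + Crc η α B nr • ∑ r, HR r * N * HR r := by
  classical
  have hB0 : (B : ℝ) ≠ 0 := Nat.cast_ne_zero.mpr hB.ne'
  have hnr0 : (nr : ℝ) ≠ 0 := Nat.cast_ne_zero.mpr (by omega)
  have hnf0 : (nf : ℝ) ≠ 0 := Nat.cast_ne_zero.mpr (by omega)
  set X := (Fin nr → Bool) × (Fin nf → Bool)
  set w : X → ℝ := fun x => selProb nr B x.1 * selProb nf B x.2 with hw_def
  set c : (Fin nr ⊕ Fin nf) → X → ℝ :=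
    Sum.elim (fun r x => if x.1 r then (1:ℝ) else 0) (fun f x => if x.2 f then (1:ℝ) else 0)
    with hc_def
  set p : (Fin nr ⊕ Fin nf) → ℝ :=
    Sum.elim (fun _ => (B:ℝ)/nr) (fun _ => (B:ℝ)/nf) with hp_def
  set M : (Fin nr ⊕ Fin nf) → Matrix (Fin d) (Fin d) ℝ :=
    Sum.elim (fun r => (-(η*(1-α)/B)) • HR r) (fun f => (η*α/B) • HF f) with hM_def
  -- symmetry of the H's
  have hRsymm : ∀ r, (HR r)ᵀ = HR r := by
    intro r
    have := (hHR r).isHermitian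
    simpa [Matrix.IsHermitian, Matrix.conjTranspose_eq_transpose_of_trivial] using this
  have hFsymm : ∀ f, (HF f)ᵀ = HF f := by
    intro f
    have := (hHF f).isHermitian
    simpa [Matrix.IsHermitian, Matrix.conjTranspose_eq_transpose_of_trivial] using this
  have hMT : ∀ i, (M i)ᵀ = M i := by
    rintro (r | f) <;>
      simp [hM_def, Matrix.transpose_smul, hRsymm, hFsymm]
  -- the moment hypotheses
  have hw : ∑ x : X, w x = 1 := by
    rw [Fintype.sum_prod_type, ← Finset.sum_mul_sum, E_one, E_one, mul_one]
  have h1 : ∀ i, ∑ x : X, w x * c i x = p i := by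
    rintro (r | f)
    · have : ∀ x : X, w x * c (Sum.inl r) x
          = (selProb nr B x.1 * (if x.1 r then (1:ℝ) else 0)) * selProb nf B x.2 := by
        intro x; simp only [hw_def, hc_def, Sum.elim_inl]; ring
      rw [Finset.sum_congr rfl fun x _ => this x, Fintype.sum_prod_type]
      dsimp +instances only
      rw [← Finset.sum_mul_sum, E_ind, E_one, mul_one]
      simp [hp_def]
    · have : ∀ x : X, w x * c (Sum.inr f) x
          = selProb nr B x.1 * (selProb nf B x.2 * (if x.2 f then (1:ℝ) else 0)) := by
        intro x; simp only [hw_def, hc_def, Sum.elim_inr]; ring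
      rw [Finset.sum_congr rfl fun x _ => this x, Fintype.sum_prod_type]
      dsimp +instances only
      rw [← Finset.sum_mul_sum, E_one, E_ind, one_mul]
      simp [hp_def]
  have h2 : ∀ i j, ∑ x : X, w x * (c i x * c j x) = if i = j then p i else p i * p j := by
    rintro (r | f) (r' | f')
    · have : ∀ x : X, w x * (c (Sum.inl r) x * c (Sum.inl r') x)
          = (selProb nr B x.1 * ((if x.1 r then (1:ℝ) else 0) * (if x.1 r' then (1:ℝ) else 0)))
              * selProb nf B x.2 := by
        intro x; simp only [hw_def, hc_def, Sum.elim_inl]; ring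
      rw [Finset.sum_congr rfl fun x _ => this x, Fintype.sum_prod_type]
      dsimp +instances only
      rw [← Finset.sum_mul_sum, E_mom, E_one, mul_one]
      by_cases h : r = r' <;> simp [h, hp_def, sq]
    · have : ∀ x : X, w x * (c (Sum.inl r) x * c (Sum.inr f') x)
          = (selProb nr B x.1 * (if x.1 r then (1:ℝ) else 0))
              * (selProb nf B x.2 * (if x.2 f' then (1:ℝ) else 0)) := by
        intro x; simp only [hw_def, hc_def, Sum.elim_inl, Sum.elim_inr]; ring
      rw [Finset.sum_congr rfl fun x _ => this x, Fintype.sum_prod_type]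
      dsimp +instances only
      rw [← Finset.sum_mul_sum, E_ind, E_ind]
      simp [hp_def]
    · have : ∀ x : X, w x * (c (Sum.inr f) x * c (Sum.inl r') x)
          = (selProb nr B x.1 * (if x.1 r' then (1:ℝ) else 0))
              * (selProb nf B x.2 * (if x.2 f then (1:ℝ) else 0)) := by
        intro x; simp only [hw_def, hc_def, Sum.elim_inl, Sum.elim_inr]; ring
      rw [Finset.sum_congr rfl fun x _ => this x, Fintype.sum_prod_type]
      dsimp +instances only
      rw [← Finset.sum_mul_sum, E_ind, E_ind]
      simp [hp_def, mul_comm]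
    · have : ∀ x : X, w x * (c (Sum.inr f) x * c (Sum.inr f') x)
          = selProb nr B x.1
              * (selProb nf B x.2 * ((if x.2 f then (1:ℝ) else 0) * (if x.2 f' then (1:ℝ) else 0))) := by
        intro x; simp only [hw_def, hc_def, Sum.elim_inr]; ring
      rw [Finset.sum_congr rfl fun x _ => this x, Fintype.sum_prod_type]
      dsimp +instances only
      rw [← Finset.sum_mul_sum, E_one, E_mom, one_mul]
      by_cases h : f = f' <;> simp [h, hp_def, sq]
  -- rewriting Jop
  have hJ : ∀ x : X, Jop η α B HR HF x = 1 + ∑ i, c i x • M i := by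
    intro x
    rw [Fintype.sum_sum_type]
    have e1 : ∀ r, c (Sum.inl r) x • M (Sum.inl r)
        = -((η * (1 - α) / B) • (if x.1 r then HR r else 0)) := by
      intro r
      simp only [hc_def, hM_def, Sum.elim_inl]
      by_cases h : x.1 r <;> simp [h]
    have e2 : ∀ f, c (Sum.inr f) x • M (Sum.inr f)
        = (η * α / B) • (if x.2 f then HF f else 0) := by
      intro f
      simp only [hc_def, hM_def, Sum.elim_inr]
      by_cases h : x.2 f <;> simp [h]
    rw [Finset.sum_congr rfl fun r _ => e1 r, Finset.sum_congr rfl fun f _ => e2 f,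
      Finset.sum_neg_distrib]
    rw [Jop, Finset.smul_sum, Finset.smul_sum]
    rw [sub_eq_add_neg, add_assoc]
  have hJT : ∀ x : X, (Jop η α B HR HF x)ᵀ = Jop η α B HR HF x := by
    intro x
    rw [hJ x, Matrix.transpose_add, Matrix.transpose_one, Matrix.transpose_sum]
    congr 1
    exact Finset.sum_congr rfl fun i _ => by rw [Matrix.transpose_smul, hMT i]
  -- Jbar
  have hJbar : Jbar η α HR HF = 1 + ∑ i, p i • M i := by
    rw [Fintype.sum_sum_type]
    have e1 : ∀ r : Fin nr, p (Sum.inl r) • M (Sum.inl r)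
        = -((η * (1 - α) * (nr:ℝ)⁻¹) • HR r) := by
      intro r
      simp only [hp_def, hM_def, Sum.elim_inl, smul_smul]
      rw [← neg_smul]
      congr 1
      field_simp
    have e2 : ∀ f : Fin nf, p (Sum.inr f) • M (Sum.inr f)
        = (η * α * (nf:ℝ)⁻¹) • HF f := by
      intro f
      simp only [hp_def, hM_def, Sum.elim_inr, smul_smul]
      congr 1
      field_simp
    rw [Finset.sum_congr rfl fun r _ => e1 r, Finset.sum_congr rfl fun f _ => e2 f,
      Finset.sum_neg_distrib]
    rw [Jbar, Hbar, Hbar, smul_smul, smul_smul, Finset.smul_sum, Finset.smul_sum,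
      sub_eq_add_neg, add_assoc]
  -- variance term
  have hVar : ∑ i, (p i - p i * p i) • (M i * N * M i)
      = Cfc η α B nf • ∑ f, HF f * N * HF f + Crc η α B nr • ∑ r, HR r * N * HR r := by
    rw [Fintype.sum_sum_type]
    have e1 : ∀ r : Fin nr, (p (Sum.inl r) - p (Sum.inl r) * p (Sum.inl r)) • (M (Sum.inl r) * N * M (Sum.inl r))
        = Crc η α B nr • (HR r * N * HR r) := by
      intro r
      simp only [hp_def, hM_def, Sum.elim_inl]
      rw [Matrix.smul_mul, Matrix.smul_mul, Matrix.mul_smul, smul_smul, smul_smul]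
      congr 1
      rw [Crc]
      field_simp
    have e2 : ∀ f : Fin nf, (p (Sum.inr f) - p (Sum.inr f) * p (Sum.inr f)) • (M (Sum.inr f) * N * M (Sum.inr f))
        = Cfc η α B nf • (HF f * N * HF f) := by
      intro f
      simp only [hp_def, hM_def, Sum.elim_inr]
      rw [Matrix.smul_mul, Matrix.smul_mul, Matrix.mul_smul, smul_smul, smul_smul]
      congr 1
      rw [Cfc]
      field_simp
    rw [Finset.sum_congr rfl fun r _ => e1 r, Finset.sum_congr rfl fun f _ => e2 f,
      ← Finset.smul_sum, ← Finset.smul_sum, add_comm]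
  -- put it together
  calc ∑ x : X, (selProb nr B x.1 * selProb nf B x.2) •
          ((Jop η α B HR HF x)ᵀ * N * Jop η α B HR HF x)
      = ∑ x : X, w x • ((1 + ∑ i, c i x • M i) * N * (1 + ∑ j, c j x • M j)) := by
        refine Finset.sum_congr rfl fun x _ => ?_
        rw [hJT x, hJ x]
    _ = (1 + ∑ i, p i • M i) * N * (1 + ∑ j, p j • M j)
          + ∑ i, (p i - p i * p i) • (M i * N * M i) := main_aux w c p M N hw h1 h2
    _ = Jbar η α HR HF * N * Jbar η α HR HF
          + Cfc η α B nf • ∑ f, HF f * N * HF f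
          + Crc η α B nr • ∑ r, HR r * N * HR r := by
        rw [hJbar, hVar, add_assoc]

end
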